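/- Let (Ω, S) be a {1,k}-valenced association scheme (every valency is 1 or k, k > 1), fix α ∈ Ω, and for r ∈ S and x, y ∈ S_k set r_{x,y} = r ∩ (αx × αy). Suppose x, y, z ∈ S_k with x ∼ z, z ∼ y, and x ∼ y, and suppose r ∈ x*z and s ∈ z*y are linked with respect to (x,y,z) with witness t (so rs ∩ x*y ⊇ {t} arising from a Desarguesian configuration). Then r_{x,z} ∘ s_{z,y} = t_{x,y} (equality of relations, where ∘ is relational composition). -/

import Mathlib

open Finset

abbrev BRel (Ω : Type*) := Finset (Ω × Ω)

variable {Ω : Type*} [Fintype Ω] [DecidableEq Ω]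

/-- The diagonal relation `1_Ω`. -/
def diagRel (Ω : Type*) [Fintype Ω] [DecidableEq Ω] : BRel Ω :=
  Finset.univ.filter (fun p => p.1 = p.2)

/-- The converse relation `r*`. -/
def convRel (r : BRel Ω) : BRel Ω := r.image Prod.swap

/-- Relational composition `a ∘ b`. -/
def compBRel (a b : BRel Ω) : BRel Ω :=
  Finset.univ.filter (fun p => ∃ γ, (p.1, γ) ∈ a ∧ (γ, p.2) ∈ b)

/-- An association scheme on a finite set `Ω`: a partition `S` of `Ω × Ω` into nonempty
basis relations, containing the diagonal, closed under converse, with well-defined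
intersection numbers `c r s t`. -/
structure AssocScheme (Ω : Type*) [Fintype Ω] [DecidableEq Ω] where
  S : Finset (BRel Ω)
  nonempty : ∀ s ∈ S, s.Nonempty
  partition : ∀ p : Ω × Ω, ∃! s, s ∈ S ∧ p ∈ s
  diag_mem : diagRel Ω ∈ S
  conv_mem : ∀ s ∈ S, convRel s ∈ S
  c : BRel Ω → BRel Ω → BRel Ω → ℕ
  c_spec : ∀ r ∈ S, ∀ s ∈ S, ∀ t ∈ S, ∀ p ∈ t,
    (Finset.univ.filter (fun γ => (p.1, γ) ∈ r ∧ (γ, p.2) ∈ s)).card = c r s t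

namespace AssocScheme

variable (X : AssocScheme Ω)

/-- The valency `n_s = c_{s,s*}^{1}`. -/
def n (s : BRel Ω) : ℕ := X.c s (convRel s) (diagRel Ω)

/-- The complex product `rs` of two basis relations: all `t ∈ S` with `c_{r,s}^t ≠ 0`. -/
def cp (r s : BRel Ω) : Finset (BRel Ω) := X.S.filter (fun t => X.c r s t ≠ 0)

/-- The complex product of two sets of basis relations. -/
def cpS (A B : Finset (BRel Ω)) : Finset (BRel Ω) :=
  A.biUnion fun a => B.biUnion fun b => X.cp a b

/-- `S_k`: the basis relations of valency `k`. -/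
def Sk (k : ℕ) : Finset (BRel Ω) := X.S.filter (fun s => X.n s = k)

/-- `x ∼ y`: every `s` in the complex product `x*y` satisfies `c_{x,s}^y = 1`. -/
def adj (x y : BRel Ω) : Prop := ∀ s ∈ X.cp (convRel x) y, X.c x s y = 1

/-- `r(α,β)`: the unique basis relation containing `(α,β)`. -/
noncomputable def rel (α β : Ω) : BRel Ω := (X.partition (α, β)).choose

/-- The indistinguishing number `c(s) = Σ_t c_{t,t*}^s`. -/
def ind (s : BRel Ω) : ℕ := ∑ t ∈ X.S, X.c t (convRel t) s

/-- `k`-saturated: every at most four element subset of `S_k` has a common neighbor. -/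
def kSaturated (k : ℕ) : Prop :=
  ∀ T ⊆ X.Sk k, T.card ≤ 4 → ∃ y ∈ X.Sk k, ∀ x ∈ T, X.adj y x

/-- `r ∈ x*z` and `s ∈ z*y` are linked with respect to `(x,y,z)`, with witness `t`. -/
def linked (k : ℕ) (x y z r s t : BRel Ω) : Prop :=
  ∃ q ∈ X.Sk k, X.adj q x ∧ X.adj q y ∧ X.adj q z ∧
    ∃ u ∈ X.cp (convRel x) q, ∃ v ∈ X.cp (convRel y) q, ∃ w ∈ X.cp (convRel z) q,
      t ∈ X.cp r s ∧
      X.cp (convRel x) z ∩ X.cp u (convRel w) = {r} ∧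
      X.cp (convRel z) y ∩ X.cp w (convRel v) = {s} ∧
      X.cp (convRel x) y ∩ X.cp u (convRel v) = {t}

/-- Desarguesian with respect to `S_k`. -/
def Desarguesian (k : ℕ) : Prop :=
  ∀ x ∈ X.Sk k, ∀ y ∈ X.Sk k, ∀ z ∈ X.Sk k, X.adj x z → X.adj z y →
    ∀ r ∈ X.cp (convRel x) z, ∀ s ∈ X.cp (convRel z) y, ∃ t, X.linked k x y z r s t

end AssocScheme

/-- `αr = {β : (α,β) ∈ r}`. -/
def relImage (r : BRel Ω) (α : Ω) : Finset Ω := (r.filter (fun p => p.1 = α)).image Prod.snd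

/-- The restriction `r_{x,y} = r ∩ (αx × αy)`. -/
def restrictRel (α : Ω) (r x y : BRel Ω) : BRel Ω :=
  r.filter (fun p => p.1 ∈ relImage x α ∧ p.2 ∈ relImage y α)


/-- An algebraic isomorphism: a bijection between the sets of basis relations
preserving all intersection numbers. -/
def AlgIso {Ω Ω' : Type*} [Fintype Ω] [DecidableEq Ω] [Fintype Ω'] [DecidableEq Ω']
    (X : AssocScheme Ω) (X' : AssocScheme Ω') (φ : BRel Ω → BRel Ω') : Prop :=
  Set.BijOn φ ↑X.S ↑X'.S ∧
    ∀ r ∈ X.S, ∀ s ∈ X.S, ∀ t ∈ X.S, X.c r s t = X'.c (φ r) (φ s) (φ t)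

/-- A `φ`-faithful map with domain `D`. -/
def Faithful {Ω Ω' : Type*} [Fintype Ω] [DecidableEq Ω] [Fintype Ω'] [DecidableEq Ω']
    (X : AssocScheme Ω) (X' : AssocScheme Ω') (φ : BRel Ω → BRel Ω')
    (D : Finset Ω) (f : Ω → Ω') : Prop :=
  Set.InjOn f ↑D ∧ ∀ a ∈ D, ∀ b ∈ D, φ (X.rel a b) = X'.rel (f a) (f b)

/-- `f` is `φ`-extendable to the point `γ`. -/
def ExtendableAt {Ω Ω' : Type*} [Fintype Ω] [DecidableEq Ω] [Fintype Ω'] [DecidableEq Ω']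
    (X : AssocScheme Ω) (X' : AssocScheme Ω') (φ : BRel Ω → BRel Ω')
    (D : Finset Ω) (f : Ω → Ω') (γ : Ω) : Prop :=
  ∃ g : Ω → Ω', (∀ a ∈ D, g a = f a) ∧ Faithful X X' φ (insert γ D) g


section Aux

variable {Ω : Type*} [Fintype Ω] [DecidableEq Ω]

lemma mem_convRel' {r : BRel Ω} {a b : Ω} : (a, b) ∈ convRel r ↔ (b, a) ∈ r := by
  constructor
  · intro h
    obtain ⟨p, hp, he⟩ := Finset.mem_image.mp h
    obtain ⟨rfl, rfl⟩ : p.2 = a ∧ p.1 = b := by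
      simpa [Prod.ext_iff, Prod.swap] using he
    simpa using hp
  · intro h
    exact Finset.mem_image.mpr ⟨(b, a), h, rfl⟩

lemma convRel_convRel' (r : BRel Ω) : convRel (convRel r) = r := by
  ext ⟨a, b⟩; simp [mem_convRel']

namespace AssocScheme

variable (X : AssocScheme Ω)

lemma rel_mem_S (a b : Ω) : X.rel a b ∈ X.S := (X.partition (a, b)).choose_spec.1.1

lemma mem_rel (a b : Ω) : (a, b) ∈ X.rel a b := (X.partition (a, b)).choose_spec.1.2

lemma rel_eq_of_mem {m : BRel Ω} (hm : m ∈ X.S) {a b : Ω} (h : (a, b) ∈ m) :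
    m = X.rel a b := (X.partition (a, b)).choose_spec.2 m ⟨hm, h⟩

lemma mem_S_of_mem_cp {a b m : BRel Ω} (h : m ∈ X.cp a b) : m ∈ X.S :=
  (Finset.mem_filter.mp h).1

lemma c_ne_zero_of_mem_cp {a b m : BRel Ω} (h : m ∈ X.cp a b) : X.c a b m ≠ 0 :=
  (Finset.mem_filter.mp h).2

/-- `c r s t = c s* r* t*`. -/
lemma c_swap {r s t : BRel Ω} (hr : r ∈ X.S) (hs : s ∈ X.S) (ht : t ∈ X.S) :
    X.c r s t = X.c (convRel s) (convRel r) (convRel t) := by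
  obtain ⟨⟨a, b⟩, hp⟩ := X.nonempty t ht
  have hp' : (b, a) ∈ convRel t := mem_convRel'.mpr hp
  rw [← X.c_spec r hr s hs t ht _ hp,
    ← X.c_spec (convRel s) (X.conv_mem s hs) (convRel r) (X.conv_mem r hr)
      (convRel t) (X.conv_mem t ht) _ hp']
  apply Finset.card_nbij' id id <;> intro γ hγ <;>
    simp only [Finset.mem_coe, id_eq, Finset.mem_filter, Finset.mem_univ, true_and, mem_convRel'] at * <;>
    tauto

lemma conv_mem_cp_conv {a b m : BRel Ω} (ha : a ∈ X.S) (hb : b ∈ X.S)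
    (h : m ∈ X.cp (convRel a) b) : convRel m ∈ X.cp (convRel b) a := by
  have hm := X.mem_S_of_mem_cp h
  have hc := X.c_ne_zero_of_mem_cp h
  rw [X.c_swap (X.conv_mem a ha) hb hm, convRel_convRel'] at hc
  exact Finset.mem_filter.mpr ⟨X.conv_mem m hm, hc⟩

lemma mem_cp_of_witness {a b m : BRel Ω} (ha : a ∈ X.S) (hb : b ∈ X.S) (hm : m ∈ X.S)
    {p q γ : Ω} (hpq : (p, q) ∈ m) (h1 : (p, γ) ∈ a) (h2 : (γ, q) ∈ b) :
    m ∈ X.cp a b := by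
  refine Finset.mem_filter.mpr ⟨hm, ?_⟩
  rw [← X.c_spec a ha b hb m hm _ hpq]
  intro hcard
  rw [Finset.card_eq_zero] at hcard
  have : γ ∈ (Finset.univ.filter fun γ => (p, γ) ∈ a ∧ (γ, q) ∈ b) := by
    simp [h1, h2]
  simp [hcard] at this

lemma mem_Sk_iff {a : BRel Ω} {k : ℕ} : a ∈ X.Sk k ↔ a ∈ X.S ∧ X.n a = k :=
  Finset.mem_filter

lemma card_filter_of_Sk {a : BRel Ω} {k : ℕ} (ha : a ∈ X.Sk k) (α : Ω) :
    (Finset.univ.filter fun γ => (α, γ) ∈ a).card = k := by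
  obtain ⟨haS, hn⟩ := X.mem_Sk_iff.mp ha
  have hd : (α, α) ∈ diagRel Ω := by simp [diagRel]
  have h2 := X.c_spec a haS (convRel a) (X.conv_mem a haS) (diagRel Ω) X.diag_mem _ hd
  rw [← hn]
  show _ = X.c a (convRel a) (diagRel Ω)
  rw [← h2]
  apply Finset.card_nbij' id id <;> intro γ hγ <;>
    simp only [Finset.mem_coe, id_eq, Finset.mem_filter, Finset.mem_univ, true_and, mem_convRel'] at * <;> tauto

/-- The key matching lemma: if `a ∼ b` with both of valency `k > 0` and `m ∈ a* b`,
then `m` restricted to `αa × αb` is a perfect matching. -/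
lemma matching {k : ℕ} (hk : 0 < k) {a b m : BRel Ω} (ha : a ∈ X.Sk k) (hb : b ∈ X.Sk k)
    (hadj : X.adj a b) (hm : m ∈ X.cp (convRel a) b) (α : Ω) :
    (∀ γ, (α, γ) ∈ b → ∃! β, ((α, β) ∈ a ∧ (β, γ) ∈ m)) ∧
    (∀ β, (α, β) ∈ a → ∃! γ, ((α, γ) ∈ b ∧ (β, γ) ∈ m)) := by
  have haS := (X.mem_Sk_iff.mp ha).1
  have hbS := (X.mem_Sk_iff.mp hb).1
  have hmS := X.mem_S_of_mem_cp hm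
  have hc1 : X.c a m b = 1 := hadj m hm
  have count1 : ∀ γ, (α, γ) ∈ b →
      (Finset.univ.filter fun β => (α, β) ∈ a ∧ (β, γ) ∈ m).card = 1 := by
    intro γ hγ
    rw [X.c_spec a haS m hmS b hbS _ hγ, hc1]
  -- double counting for the other direction
  have count2' : ∀ β, (α, β) ∈ a →
      (Finset.univ.filter fun γ => (α, γ) ∈ b ∧ (β, γ) ∈ m).card
        = X.c b (convRel m) a := by
    intro β hβ
    rw [← X.c_spec b hbS (convRel m) (X.conv_mem m hmS) a haS _ hβ]
    congr 1
    apply Finset.filter_congr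
    intro γ _
    simp [mem_convRel']
  have hdc : k * X.c b (convRel m) a = k := by
    have lhs : ∀ β : Ω, (∑ γ : Ω, if ((α, β) ∈ a ∧ (α, γ) ∈ b ∧ (β, γ) ∈ m) then 1 else 0)
        = if (α, β) ∈ a then X.c b (convRel m) a else 0 := by
      intro β
      by_cases hβ : (α, β) ∈ a
      · have e : (∑ γ : Ω, if ((α, β) ∈ a ∧ (α, γ) ∈ b ∧ (β, γ) ∈ m) then 1 else 0)
            = (Finset.univ.filter fun γ => (α, γ) ∈ b ∧ (β, γ) ∈ m).card := by
          rw [Finset.card_filter]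
          exact Finset.sum_congr rfl fun γ _ => by simp [hβ]
        rw [e, count2' β hβ, if_pos hβ]
      · simp [hβ]
    have rhs : ∀ γ : Ω, (∑ β : Ω, if ((α, β) ∈ a ∧ (α, γ) ∈ b ∧ (β, γ) ∈ m) then 1 else 0)
        = if (α, γ) ∈ b then 1 else 0 := by
      intro γ
      by_cases hγ : (α, γ) ∈ b
      · have e : (∑ β : Ω, if ((α, β) ∈ a ∧ (α, γ) ∈ b ∧ (β, γ) ∈ m) then 1 else 0)
            = (Finset.univ.filter fun β => (α, β) ∈ a ∧ (β, γ) ∈ m).card := by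
          rw [Finset.card_filter]
          exact Finset.sum_congr rfl fun β _ => by simp [hγ, and_assoc]
        rw [e, count1 γ hγ, if_pos hγ]
      · simp [hγ]
    have swap : (∑ β : Ω, ∑ γ : Ω, if ((α, β) ∈ a ∧ (α, γ) ∈ b ∧ (β, γ) ∈ m) then 1 else 0)
        = ∑ γ : Ω, ∑ β : Ω, if ((α, β) ∈ a ∧ (α, γ) ∈ b ∧ (β, γ) ∈ m) then 1 else 0 :=
      Finset.sum_comm
    have e1 : (∑ β : Ω, ∑ γ : Ω, if ((α, β) ∈ a ∧ (α, γ) ∈ b ∧ (β, γ) ∈ m) then 1 else 0)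
        = k * X.c b (convRel m) a := by
      rw [Finset.sum_congr rfl fun β _ => lhs β]
      calc (∑ β : Ω, if (α, β) ∈ a then X.c b (convRel m) a else 0)
          = (∑ β : Ω, (if (α, β) ∈ a then 1 else 0)) * X.c b (convRel m) a := by
            rw [Finset.sum_mul]
            exact Finset.sum_congr rfl fun β _ => by by_cases h : (α, β) ∈ a <;> simp [h]
        _ = k * X.c b (convRel m) a := by
            rw [← Finset.card_filter, X.card_filter_of_Sk ha α]
    have e2 : (∑ γ : Ω, ∑ β : Ω, if ((α, β) ∈ a ∧ (α, γ) ∈ b ∧ (β, γ) ∈ m) then 1 else 0)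
        = k := by
      rw [Finset.sum_congr rfl fun γ _ => rhs γ, ← Finset.card_filter,
        X.card_filter_of_Sk hb α]
    rw [← e1, swap, e2]
  have hc2 : X.c b (convRel m) a = 1 :=
    Nat.eq_of_mul_eq_mul_left hk (by rw [Nat.mul_one]; exact hdc)
  have eu : ∀ (p : Ω → Prop) [DecidablePred p],
      (Finset.univ.filter p).card = 1 → ∃! x, p x := by
    intro p _ h
    obtain ⟨x, hx⟩ := Finset.card_eq_one.mp h
    refine ⟨x, ?_, ?_⟩
    · have : x ∈ Finset.univ.filter p := hx ▸ Finset.mem_singleton_self x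
      exact (Finset.mem_filter.mp this).2
    · intro y hy
      have : y ∈ Finset.univ.filter p := Finset.mem_filter.mpr ⟨Finset.mem_univ _, hy⟩
      rw [hx] at this
      exact Finset.mem_singleton.mp this
  constructor
  · intro γ hγ
    exact eu _ (count1 γ hγ)
  · intro β hβ
    apply eu _ (by rw [count2' β hβ, hc2])

end AssocScheme

lemma mem_relImage {r : BRel Ω} {α β : Ω} : β ∈ relImage r α ↔ (α, β) ∈ r := by
  simp only [relImage, Finset.mem_image, Finset.mem_filter]
  constructor
  · rintro ⟨⟨p1, p2⟩, ⟨hp, rfl⟩, rfl⟩; exact hp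
  · intro h; exact ⟨(α, β), ⟨h, rfl⟩, rfl⟩

lemma mem_restrictRel {α : Ω} {r x y : BRel Ω} {p q : Ω} :
    (p, q) ∈ restrictRel α r x y ↔ (p, q) ∈ r ∧ (α, p) ∈ x ∧ (α, q) ∈ y := by
  simp [restrictRel, mem_relImage]

lemma mem_compBRel {a b : BRel Ω} {p q : Ω} :
    (p, q) ∈ compBRel a b ↔ ∃ γ, (p, γ) ∈ a ∧ (γ, q) ∈ b := by
  simp [compBRel]

end Aux


theorem linked_restriction_eq (X : AssocScheme Ω) (k : ℕ) (hk : 1 < k)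
    (hval : ∀ s ∈ X.S, X.n s = 1 ∨ X.n s = k) (α : Ω)
    (x : BRel Ω) (hx : x ∈ X.Sk k) (y : BRel Ω) (hy : y ∈ X.Sk k) (z : BRel Ω) (hz : z ∈ X.Sk k)
    (hxz : X.adj x z) (hzy : X.adj z y) (hxy : X.adj x y)
    (r : BRel Ω) (hr : r ∈ X.cp (convRel x) z) (s : BRel Ω) (hs : s ∈ X.cp (convRel z) y)
    (t : BRel Ω) (hlinked : X.linked k x y z r s t) :
    compBRel (restrictRel α r x z) (restrictRel α s z y) = restrictRel α t x y := by
  have hk0 : 0 < k := by omega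
  obtain ⟨q, hq, hqx, hqy, hqz, u, hu, v, hv, w, hw, htcp, hRR, hSS, hTT⟩ := hlinked
  have hxS := (X.mem_Sk_iff.mp hx).1
  have hyS := (X.mem_Sk_iff.mp hy).1
  have hzS := (X.mem_Sk_iff.mp hz).1
  have hqS := (X.mem_Sk_iff.mp hq).1
  have huS := X.mem_S_of_mem_cp hu
  have hvS := X.mem_S_of_mem_cp hv
  have hwS := X.mem_S_of_mem_cp hw
  have ht_xy : t ∈ X.cp (convRel x) y := by
    have h : t ∈ X.cp (convRel x) y ∩ X.cp u (convRel v) := by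
      rw [hTT]; exact Finset.mem_singleton_self t
    exact (Finset.mem_inter.mp h).1
  have Mr := X.matching hk0 hx hz hxz hr α
  have Ms := X.matching hk0 hz hy hzy hs α
  have Mt := X.matching hk0 hx hy hxy ht_xy α
  have hu' : convRel u ∈ X.cp (convRel q) x := X.conv_mem_cp_conv hxS hqS hu
  have hv' : convRel v ∈ X.cp (convRel q) y := X.conv_mem_cp_conv hyS hqS hv
  have hw' : convRel w ∈ X.cp (convRel q) z := X.conv_mem_cp_conv hzS hqS hw
  have Mu := X.matching hk0 hq hx hqx hu' α
  have Mv := X.matching hk0 hq hy hqy hv' α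
  have Mw := X.matching hk0 hq hz hqz hw' α
  have key : ∀ β, (α, β) ∈ x → ∃ γ δ, (α, γ) ∈ z ∧ (α, δ) ∈ y ∧
      (β, γ) ∈ r ∧ (γ, δ) ∈ s ∧ (β, δ) ∈ t := by
    intro β hβ
    obtain ⟨ε, ⟨hεq, hεβ⟩, -⟩ := Mu.1 β hβ
    obtain ⟨γ, ⟨hγz, hεγ⟩, -⟩ := Mw.2 ε hεq
    obtain ⟨δ, ⟨hδy, hεδ⟩, -⟩ := Mv.2 ε hεq
    have hβε : (β, ε) ∈ u := mem_convRel'.mp hεβ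
    have hβγ : (β, γ) ∈ r := by
      have h1 : X.rel β γ ∈ X.cp (convRel x) z :=
        X.mem_cp_of_witness (X.conv_mem x hxS) hzS (X.rel_mem_S β γ) (X.mem_rel β γ)
          (mem_convRel'.mpr hβ) hγz
      have h2 : X.rel β γ ∈ X.cp u (convRel w) :=
        X.mem_cp_of_witness huS (X.conv_mem w hwS) (X.rel_mem_S β γ) (X.mem_rel β γ)
          hβε hεγ
      have h3 : X.rel β γ ∈ ({r} : Finset (BRel Ω)) := hRR ▸ Finset.mem_inter.mpr ⟨h1, h2⟩
      rw [Finset.mem_singleton] at h3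
      rw [← h3]; exact X.mem_rel β γ
    have hγδ : (γ, δ) ∈ s := by
      have h1 : X.rel γ δ ∈ X.cp (convRel z) y :=
        X.mem_cp_of_witness (X.conv_mem z hzS) hyS (X.rel_mem_S γ δ) (X.mem_rel γ δ)
          (mem_convRel'.mpr hγz) hδy
      have h2 : X.rel γ δ ∈ X.cp w (convRel v) :=
        X.mem_cp_of_witness hwS (X.conv_mem v hvS) (X.rel_mem_S γ δ) (X.mem_rel γ δ)
          (mem_convRel'.mp hεγ) hεδ
      have h3 : X.rel γ δ ∈ ({s} : Finset (BRel Ω)) := hSS ▸ Finset.mem_inter.mpr ⟨h1, h2⟩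
      rw [Finset.mem_singleton] at h3
      rw [← h3]; exact X.mem_rel γ δ
    have hβδ : (β, δ) ∈ t := by
      have h1 : X.rel β δ ∈ X.cp (convRel x) y :=
        X.mem_cp_of_witness (X.conv_mem x hxS) hyS (X.rel_mem_S β δ) (X.mem_rel β δ)
          (mem_convRel'.mpr hβ) hδy
      have h2 : X.rel β δ ∈ X.cp u (convRel v) :=
        X.mem_cp_of_witness huS (X.conv_mem v hvS) (X.rel_mem_S β δ) (X.mem_rel β δ)
          hβε hεδ
      have h3 : X.rel β δ ∈ ({t} : Finset (BRel Ω)) := hTT ▸ Finset.mem_inter.mpr ⟨h1, h2⟩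
      rw [Finset.mem_singleton] at h3
      rw [← h3]; exact X.mem_rel β δ
    exact ⟨γ, δ, hγz, hδy, hβγ, hγδ, hβδ⟩
  ext ⟨β, δ⟩
  rw [mem_compBRel, mem_restrictRel]
  constructor
  · rintro ⟨γ, hβγ', hγδ'⟩
    rw [mem_restrictRel] at hβγ' hγδ'
    obtain ⟨hβγr, hβx, hγz'⟩ := hβγ'
    obtain ⟨hγδs, -, hδy'⟩ := hγδ'
    obtain ⟨γ₀, δ₀, hγ₀z, hδ₀y, hrr, hss, htt⟩ := key β hβx
    obtain ⟨γ₁, -, huniq⟩ := Mr.2 β hβx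
    have e1 : γ = γ₀ := by rw [huniq γ ⟨hγz', hβγr⟩, huniq γ₀ ⟨hγ₀z, hrr⟩]
    obtain ⟨δ₁, -, huniq2⟩ := Ms.2 γ₀ hγ₀z
    have e2 : δ = δ₀ := by
      rw [huniq2 δ ⟨hδy', e1 ▸ hγδs⟩, huniq2 δ₀ ⟨hδ₀y, hss⟩]
    subst e2
    exact ⟨htt, hβx, hδy'⟩
  · rintro ⟨hβδt, hβx, hδy'⟩
    obtain ⟨γ₀, δ₀, hγ₀z, hδ₀y, hrr, hss, htt⟩ := key β hβx
    obtain ⟨δ₁, -, huniq⟩ := Mt.2 β hβx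
    have e : δ = δ₀ := by rw [huniq δ ⟨hδy', hβδt⟩, huniq δ₀ ⟨hδ₀y, htt⟩]
    subst e
    exact ⟨γ₀, mem_restrictRel.mpr ⟨hrr, hβx, hγ₀z⟩, mem_restrictRel.mpr ⟨hss, hγ₀z, hδ₀y⟩⟩
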